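/- Let d, P, k ≥ 1 be integers with k ≤ d, let 0 < α ≤ 1 and 0 < β < 1, let C ≥ max(8Pk, 8k/(Pα)), and let R ≥ 8·ln(2d/β). For the random count-median-of-means sketch with parameters (R, P, C) and every z ∈ ℝ^d, with probability at least 1 − β, simultaneously for all q ∈ {1,…,d}: (U(S(z))_q − z_q)² ≤ α·‖z_tail(k)‖²/k. -/

import Mathlib

open MeasureTheory ProbabilityTheory
open scoped ENNReal NNReal

noncomputable section

/-- Uniform probability measure on a finite type. -/
def unifMeasure (α : Type*) [Fintype α] [MeasurableSpace α] : Measure α :=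
  (Fintype.card α : ℝ≥0∞)⁻¹ • Measure.count

/-- Randomness of a count-mean sketch with parameters `(P, C)` on `ℝ^d`:
for each `p : Fin P` a hash function `h_p : Fin d → Fin C` and sign bits `s_p : Fin d → Bool`,
all mutually independent and uniform (hence jointly: the uniform measure on this type). -/
abbrev SketchSpace (d P C : ℕ) : Type :=
  (Fin P → Fin d → Fin C) × (Fin P → Fin d → Bool)

/-- Sign associated to a boolean. -/
def sgn (b : Bool) : ℝ := if b then 1 else -1


section Aux
open Finset

lemma sgn_mul_self (b : Bool) : sgn b * sgn b = 1 := by cases b <;> norm_num [sgn]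

lemma sgn_not (b : Bool) : sgn (!b) = - sgn b := by cases b <;> norm_num [sgn]

section Signs
variable {P d : ℕ}

/-- sflip one sign bit -/
def sflip (p0 : Fin P) (j0 : Fin d) (s : Fin P → Fin d → Bool) : Fin P → Fin d → Bool :=
  Function.update s p0 (Function.update (s p0) j0 (!(s p0 j0)))

lemma flip_apply (p0 : Fin P) (j0 : Fin d) (s : Fin P → Fin d → Bool) (p : Fin P) (j : Fin d) :
    sflip p0 j0 s p j = if p = p0 ∧ j = j0 then !(s p0 j0) else s p j := by
  unfold sflip
  rcases eq_or_ne p p0 with rfl | hp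
  · simp only [Function.update_self]
    rcases eq_or_ne j j0 with rfl | hj
    · simp
    · simp [Function.update_of_ne hj, hj]
  · simp [Function.update_of_ne hp, hp]

lemma sflip_flip (p0 : Fin P) (j0 : Fin d) (s : Fin P → Fin d → Bool) :
    sflip p0 j0 (sflip p0 j0 s) = s := by
  funext p j
  rcases eq_or_ne p p0 with rfl | hp
  · rcases eq_or_ne j j0 with rfl | hj
    · simp [flip_apply]
    · simp [flip_apply, hj]
  · simp [flip_apply, hp]

lemma flip_ne (p0 : Fin P) (j0 : Fin d) (s : Fin P → Fin d → Bool) :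
    sflip p0 j0 s ≠ s := by
  intro hs
  have := congrFun (congrFun hs p0) j0
  simp [flip_apply] at this

lemma sum_flip_neg (p0 : Fin P) (j0 : Fin d) (f : (Fin P → Fin d → Bool) → ℝ)
    (hf : ∀ s, f (sflip p0 j0 s) = - f s) : ∑ s : Fin P → Fin d → Bool, f s = 0 := by
  refine Finset.sum_involution (fun s _ => sflip p0 j0 s) (fun s _ => by rw [hf]; ring)
    (fun s _ _ => flip_ne p0 j0 s) (fun s _ => mem_univ _) (fun s _ => sflip_flip p0 j0 s)

lemma sum_sign_orth (p p' : Fin P) (q i i' : Fin d) (hi : i ≠ q) (hi' : i' ≠ q)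
    (hne : (p, i) ≠ (p', i')) :
    ∑ s : Fin P → Fin d → Bool,
      sgn (s p q) * sgn (s p i) * (sgn (s p' q) * sgn (s p' i')) = 0 := by
  rcases eq_or_ne p p' with rfl | hp
  · have hii' : i ≠ i' := by
      intro h; exact hne (by rw [h])
    refine sum_flip_neg p i _ (fun s => ?_)
    simp only [flip_apply, Ne.symm hi, Ne.symm hii', and_true, true_and, and_false, if_true,
      if_false, if_pos rfl, eq_self_iff_true, sgn_not]
    ring
  · refine sum_flip_neg p q _ (fun s => ?_)
    simp only [flip_apply, hi, hp.symm, and_true, true_and, and_false, false_and, if_true,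
      if_false, if_pos rfl, eq_self_iff_true, sgn_not]
    ring

end Signs

section Hash
variable {P d C : ℕ} [NeZero C]

/-- Splitting off the value of one hash cell relative to another. -/
def hashEquiv (p : Fin P) (i q : Fin d) (hiq : i ≠ q) :
    (Fin P → Fin d → Fin C) ≃ Fin C × {h : Fin P → Fin d → Fin C // h p i = h p q} where
  toFun h := (h p i - h p q,
    ⟨Function.update h p (Function.update (h p) i (h p q)), by
      simp [Function.update_self, Function.update_of_ne hiq.symm]⟩)
  invFun x := Function.update x.2.1 p (Function.update (x.2.1 p) i (x.2.1 p q + x.1))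
  left_inv h := by
    funext p' j
    rcases eq_or_ne p' p with rfl | hp'
    · simp only [Function.update_self, Function.update_of_ne hiq.symm]
      rcases eq_or_ne j i with rfl | hj
      · simp [Function.update_self]
      · simp [Function.update_of_ne hj]
    · simp [Function.update_of_ne hp']
  right_inv x := by
    obtain ⟨c, h, hh⟩ := x
    refine Prod.ext ?_ (Subtype.ext ?_)
    · simp [Function.update_self, Function.update_of_ne hiq.symm]
    · funext p' j
      rcases eq_or_ne p' p with rfl | hp'
      · simp only [Function.update_self, Function.update_idem, Function.update_of_ne hiq.symm]
        rcases eq_or_ne j i with rfl | hj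
        · simp [Function.update_self, ← hh]
        · simp [Function.update_of_ne hj]
      · simp [Function.update_of_ne hp']

lemma collision_card (p : Fin P) {i q : Fin d} (hiq : i ≠ q) :
    C * #(filter (fun h : Fin P → Fin d → Fin C => h p i = h p q) univ)
      = Fintype.card (Fin P → Fin d → Fin C) := by
  have h2 := Fintype.card_congr (hashEquiv (C := C) p i q hiq)
  rw [Fintype.card_prod, Fintype.card_fin, Fintype.card_subtype] at h2
  exact h2.symm

lemma sum_collision (p : Fin P) {i q : Fin d} (hiq : i ≠ q) :
    ∑ h : Fin P → Fin d → Fin C, (if h p i = h p q then (1 : ℝ) else 0)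
      = (Fintype.card (Fin P → Fin d → Fin C) : ℝ) / C := by
  have hC : (0 : ℝ) < C := by
    have := Fintype.card_pos (α := Fin C)
    simp only [Fintype.card_fin] at this
    exact_mod_cast this
  rw [Finset.sum_boole, eq_div_iff hC.ne']
  exact_mod_cast (mul_comm _ _).trans (collision_card p hiq)

end Hash

section Moment
variable {P d C : ℕ} [NeZero C] (z : Fin d → ℝ) (q : Fin d)

private lemma Fsq_rearr (a b a' b' x x' u u' : ℝ) :
    (a * b * x * u) * (a' * b' * x' * u') = (a * b * (a' * b')) * ((x * u) * (x' * u')) := by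
  ring

lemma sum_s_diag (h : Fin P → Fin d → Fin C) (c : Fin P × Fin d) :
    ∑ s : Fin P → Fin d → Bool,
      (sgn (s c.1 q) * sgn (s c.1 c.2) * (if h c.1 c.2 = h c.1 q then (1 : ℝ) else 0) * z c.2) *
      (sgn (s c.1 q) * sgn (s c.1 c.2) * (if h c.1 c.2 = h c.1 q then (1 : ℝ) else 0) * z c.2)
      = (Fintype.card (Fin P → Fin d → Bool) : ℝ) *
          ((if h c.1 c.2 = h c.1 q then (1 : ℝ) else 0) * z c.2 ^ 2) := by
  have hone : ∀ s : Fin P → Fin d → Bool,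
      sgn (s c.1 q) * sgn (s c.1 c.2) * (sgn (s c.1 q) * sgn (s c.1 c.2)) = 1 := by
    intro s
    have e : sgn (s c.1 q) * sgn (s c.1 c.2) * (sgn (s c.1 q) * sgn (s c.1 c.2))
        = (sgn (s c.1 q) * sgn (s c.1 q)) * (sgn (s c.1 c.2) * sgn (s c.1 c.2)) := by ring
    rw [e, sgn_mul_self, sgn_mul_self, one_mul]
  simp_rw [Fsq_rearr, hone, one_mul]
  rw [Finset.sum_const, Finset.card_univ, nsmul_eq_mul]
  congr 1
  split <;> ring

lemma sum_s_offdiag (h : Fin P → Fin d → Fin C) (c c' : Fin P × Fin d)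
    (hcq : c.2 ≠ q) (hcq' : c'.2 ≠ q) (hne : c' ≠ c) :
    ∑ s : Fin P → Fin d → Bool,
      (sgn (s c.1 q) * sgn (s c.1 c.2) * (if h c.1 c.2 = h c.1 q then (1 : ℝ) else 0) * z c.2) *
      (sgn (s c'.1 q) * sgn (s c'.1 c'.2) * (if h c'.1 c'.2 = h c'.1 q then (1 : ℝ) else 0) * z c'.2)
      = 0 := by
  simp_rw [Fsq_rearr]
  rw [← Finset.sum_mul,
    sum_sign_orth c.1 c'.1 q c.2 c'.2 hcq hcq' (fun hp => hne (Prod.ext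
      (congrArg Prod.fst hp).symm (congrArg Prod.snd hp).symm)), zero_mul]

lemma sum_EL_sq (L : Finset (Fin d)) (hqL : ∀ i ∈ L, i ≠ q) :
    ∑ ω : (Fin P → Fin d → Fin C) × (Fin P → Fin d → Bool),
      (∑ c ∈ univ ×ˢ L, sgn (ω.2 c.1 q) * sgn (ω.2 c.1 c.2) *
        (if ω.1 c.1 c.2 = ω.1 c.1 q then (1 : ℝ) else 0) * z c.2) ^ 2
    = (Fintype.card ((Fin P → Fin d → Fin C) × (Fin P → Fin d → Bool)) : ℝ) / C *
        (P * ∑ i ∈ L, z i ^ 2) := by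
  rw [Fintype.sum_prod_type]
  have step1 : ∀ h : Fin P → Fin d → Fin C,
      ∑ s : Fin P → Fin d → Bool,
        (∑ c ∈ univ ×ˢ L, sgn (s c.1 q) * sgn (s c.1 c.2) *
          (if h c.1 c.2 = h c.1 q then (1 : ℝ) else 0) * z c.2) ^ 2
      = (Fintype.card (Fin P → Fin d → Bool) : ℝ) *
          ∑ c ∈ univ ×ˢ L, (if h c.1 c.2 = h c.1 q then (1 : ℝ) else 0) * z c.2 ^ 2 := by
    intro h
    have e1 : ∑ s : Fin P → Fin d → Bool,
        (∑ c ∈ univ ×ˢ L, sgn (s c.1 q) * sgn (s c.1 c.2) *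
          (if h c.1 c.2 = h c.1 q then (1 : ℝ) else 0) * z c.2) ^ 2
        = ∑ c ∈ univ ×ˢ L, ∑ c' ∈ univ ×ˢ L, ∑ s : Fin P → Fin d → Bool,
            (sgn (s c.1 q) * sgn (s c.1 c.2) * (if h c.1 c.2 = h c.1 q then (1 : ℝ) else 0) * z c.2) *
            (sgn (s c'.1 q) * sgn (s c'.1 c'.2) * (if h c'.1 c'.2 = h c'.1 q then (1 : ℝ) else 0) * z c'.2) := by
      simp_rw [sq, Finset.sum_mul_sum]
      rw [Finset.sum_comm]
      exact Finset.sum_congr rfl (fun c _ => Finset.sum_comm)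
    rw [e1]
    have inner : ∀ c ∈ univ ×ˢ L,
        (∑ c' ∈ univ ×ˢ L, ∑ s : Fin P → Fin d → Bool,
          (sgn (s c.1 q) * sgn (s c.1 c.2) * (if h c.1 c.2 = h c.1 q then (1 : ℝ) else 0) * z c.2) *
          (sgn (s c'.1 q) * sgn (s c'.1 c'.2) * (if h c'.1 c'.2 = h c'.1 q then (1 : ℝ) else 0) * z c'.2))
        = (Fintype.card (Fin P → Fin d → Bool) : ℝ) *
            ((if h c.1 c.2 = h c.1 q then (1 : ℝ) else 0) * z c.2 ^ 2) := by
      intro c hc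
      rw [Finset.sum_eq_single_of_mem c hc (fun c' hc' hne =>
        sum_s_offdiag z q h c c' (hqL c.2 (Finset.mem_product.1 hc).2)
          (hqL c'.2 (Finset.mem_product.1 hc').2) hne)]
      exact sum_s_diag z q h c
    rw [Finset.sum_congr rfl inner, ← Finset.mul_sum]
  have inner2 : ∀ c ∈ univ ×ˢ L,
      (∑ h : Fin P → Fin d → Fin C, (if h c.1 c.2 = h c.1 q then (1 : ℝ) else 0) * z c.2 ^ 2)
      = (Fintype.card (Fin P → Fin d → Fin C) : ℝ) / C * z c.2 ^ 2 := by
    intro c hc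
    rw [← Finset.sum_mul, sum_collision c.1 (hqL c.2 (Finset.mem_product.1 hc).2)]
  rw [Finset.sum_congr rfl (fun h _ => step1 h), ← Finset.mul_sum]
  rw [Finset.sum_comm]
  rw [Finset.sum_congr rfl inner2, ← Finset.mul_sum, Finset.sum_product]
  simp only [Finset.sum_const, Finset.card_univ, Fintype.card_fin, nsmul_eq_mul,
    Fintype.card_prod]
  push_cast
  ring

end Moment

end Aux

/-- The count-mean sketch `S z ∈ ℝ^{P×C}`:
`(S z)_{(p,c)} = (1/√P) ∑ i, s_p(i)·1[h_p(i)=c]·z_i`. -/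
def Sk {d P C : ℕ} (ω : SketchSpace d P C) (z : Fin d → ℝ) : Fin P × Fin C → ℝ :=
  fun pc => (Real.sqrt P)⁻¹ *
    ∑ i : Fin d, sgn (ω.2 pc.1 i) * (if ω.1 pc.1 i = pc.2 then (1 : ℝ) else 0) * z i

/-- `Sᵀ y ∈ ℝ^d`: `(Sᵀ y)_q = (1/√P) ∑ p, s_p(q)·y_{(p, h_p(q))}`. -/
def SkT {d P C : ℕ} (ω : SketchSpace d P C) (y : Fin P × Fin C → ℝ) : Fin d → ℝ :=
  fun q => (Real.sqrt P)⁻¹ * ∑ p : Fin P, sgn (ω.2 p q) * y (p, ω.1 p q)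


open Finset in
lemma skt_sk_sub {d P C : ℕ} (hP : 1 ≤ P) (ω : SketchSpace d P C) (z : Fin d → ℝ) (q : Fin d) :
    SkT ω (Sk ω z) q - z q
      = (P : ℝ)⁻¹ * ∑ p : Fin P, ∑ i ∈ univ.erase q,
          sgn (ω.2 p q) * sgn (ω.2 p i) * (if ω.1 p i = ω.1 p q then (1 : ℝ) else 0) * z i := by
  have hP0 : (P : ℝ) ≠ 0 := by positivity
  have hsq : (Real.sqrt P)⁻¹ * (Real.sqrt P)⁻¹ = (P : ℝ)⁻¹ := by
    rw [← mul_inv, Real.mul_self_sqrt (by positivity)]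
  unfold SkT Sk
  simp only
  have e1 : ∀ p : Fin P,
      sgn (ω.2 p q) * ((Real.sqrt P)⁻¹ *
        ∑ i : Fin d, sgn (ω.2 p i) * (if ω.1 p i = ω.1 p q then (1 : ℝ) else 0) * z i)
      = (Real.sqrt P)⁻¹ * ∑ i : Fin d,
          sgn (ω.2 p q) * sgn (ω.2 p i) * (if ω.1 p i = ω.1 p q then (1 : ℝ) else 0) * z i := by
    intro p
    rw [Finset.mul_sum, Finset.mul_sum, Finset.mul_sum]
    exact Finset.sum_congr rfl (fun i _ => by ring)
  simp only [e1]
  rw [← Finset.mul_sum, ← mul_assoc, hsq]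
  have e2 : ∀ p : Fin P,
      ∑ i : Fin d, sgn (ω.2 p q) * sgn (ω.2 p i) * (if ω.1 p i = ω.1 p q then (1 : ℝ) else 0) * z i
      = (∑ i ∈ univ.erase q,
          sgn (ω.2 p q) * sgn (ω.2 p i) * (if ω.1 p i = ω.1 p q then (1 : ℝ) else 0) * z i)
        + z q := by
    intro p
    rw [← Finset.sum_erase_add univ _ (Finset.mem_univ q), if_pos rfl]
    congr 1
    have e3 : sgn (ω.2 p q) * sgn (ω.2 p q) * (1 : ℝ) * z q
        = (sgn (ω.2 p q) * sgn (ω.2 p q)) * z q := by ring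
    rw [e3, sgn_mul_self, one_mul]
  simp only [e2]
  rw [Finset.sum_add_distrib, Finset.sum_const, Finset.card_univ, Fintype.card_fin, nsmul_eq_mul]
  field_simp
  ring

/-- Euclidean (ℓ₂) norm on `ℝ^d`. -/
def norm2 {d : ℕ} (z : Fin d → ℝ) : ℝ := Real.sqrt (∑ i, (z i) ^ 2)

/-- `w` has at most `k` nonzero coordinates. -/
def sparse {d : ℕ} (k : ℕ) (w : Fin d → ℝ) : Prop :=
  ∃ I : Finset (Fin d), I.card ≤ k ∧ ∀ i ∉ I, w i = 0

/-- The tail norm `‖z_tail(k)‖`: the minimum of `‖z - w‖₂` over `k`-sparse `w`. -/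
def tailNorm {d : ℕ} (k : ℕ) (z : Fin d → ℝ) : ℝ :=
  sInf {t : ℝ | ∃ w : Fin d → ℝ, sparse k w ∧ t = norm2 (fun i => z i - w i)}


open Finset in
lemma tail_exists {d k : ℕ} (hkd : k ≤ d) (z : Fin d → ℝ) :
    ∃ I : Finset (Fin d), #I = k ∧ ∑ i ∈ univ \ I, z i ^ 2 ≤ tailNorm k z ^ 2 := by
  have hkd' : k ≤ Fintype.card (Fin d) := by simpa using hkd
  obtain ⟨I, hImem, hImax⟩ := Finset.exists_max_image (Finset.powersetCard k (univ : Finset (Fin d)))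
    (fun J => ∑ i ∈ J, z i ^ 2)
    (Finset.powersetCard_nonempty.2 (by simpa using hkd))
  have hIcard : #I = k := (Finset.mem_powersetCard.1 hImem).2
  refine ⟨I, hIcard, ?_⟩
  set S := {t : ℝ | ∃ w : Fin d → ℝ, sparse k w ∧ t = norm2 (fun i => z i - w i)} with hS
  have hmem : norm2 (fun i => z i - (if i ∈ I then z i else 0)) ∈ S :=
    ⟨fun i => if i ∈ I then z i else 0, ⟨I, hIcard.le, fun i hi => if_neg hi⟩, rfl⟩
  have hlb : ∀ t ∈ S, Real.sqrt (∑ i ∈ univ \ I, z i ^ 2) ≤ t := by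
    rintro t ⟨w, ⟨J0, hJ0card, hJ0⟩, rfl⟩
    obtain ⟨J, hJ0J, hJcard⟩ := Finset.exists_superset_card_eq hJ0card hkd'
    unfold norm2
    apply Real.sqrt_le_sqrt
    have step1 : ∑ i ∈ univ \ J, z i ^ 2 ≤ ∑ i : Fin d, (z i - w i) ^ 2 := by
      have := Finset.sum_le_sum_of_subset_of_nonneg (Finset.sdiff_subset : univ \ J ⊆ univ)
        (fun i _ _ => sq_nonneg (z i - w i))
      refine le_trans (le_of_eq ?_) this
      apply Finset.sum_congr rfl
      intro i hi
      have hiJ : i ∉ J := (Finset.mem_sdiff.1 hi).2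
      rw [hJ0 i (fun hmem => hiJ (hJ0J hmem)), sub_zero]
    have step2 : ∑ i ∈ univ \ I, z i ^ 2 ≤ ∑ i ∈ univ \ J, z i ^ 2 := by
      rw [Finset.sum_sdiff_eq_sub (Finset.subset_univ I),
        Finset.sum_sdiff_eq_sub (Finset.subset_univ J)]
      have := hImax J (Finset.mem_powersetCard.2 ⟨Finset.subset_univ J, hJcard⟩)
      linarith
    linarith
  have htail : Real.sqrt (∑ i ∈ univ \ I, z i ^ 2) ≤ tailNorm k z := le_csInf ⟨_, hmem⟩ hlb
  have hsq := pow_le_pow_left₀ (Real.sqrt_nonneg (∑ i ∈ univ \ I, z i ^ 2)) htail 2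
  rwa [Real.sq_sqrt (Finset.sum_nonneg (fun i _ => sq_nonneg (z i)))] at hsq

/-- `w` is a top-`m` truncation of `v`: it keeps the entries of `v` on a set `I` of `m`
coordinates of largest absolute value and zeroes out the rest. -/
def IsTopTrunc {d : ℕ} (m : ℕ) (v w : Fin d → ℝ) : Prop :=
  ∃ I : Finset (Fin d), I.card = m ∧ (∀ i ∈ I, ∀ j ∉ I, |v j| ≤ |v i|) ∧
    (∀ i ∈ I, w i = v i) ∧ ∀ i ∉ I, w i = 0

/-- Symmetric median: the midpoint of the `⌈R/2⌉`-th and `(⌊R/2⌋+1)`-th smallest entries. -/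
def med {R : ℕ} (x : Fin R → ℝ) : ℝ :=
  if h : R = 0 then 0
  else (x (Tuple.sort x ⟨(R + 1) / 2 - 1, by omega⟩) + x (Tuple.sort x ⟨R / 2, by omega⟩)) / 2


open Finset in
lemma med_close {R : ℕ} (hR : 1 ≤ R) (x : Fin R → ℝ) (a t2 : ℝ)
    (h : #(filter (fun r => t2 < (x r - a) ^ 2) univ) < (R + 1) / 2) :
    (med x - a) ^ 2 ≤ t2 := by
  have hRR : ¬ R = 0 := by omega
  have hcard : #(filter (fun r => t2 < (x r - a) ^ 2) (univ : Finset (Fin R))) < R := by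
    have : (R + 1) / 2 ≤ R := by omega
    omega
  have ht2 : 0 ≤ t2 := by
    have hne : filter (fun r => t2 < (x r - a) ^ 2) (univ : Finset (Fin R)) ≠ univ := by
      intro he
      rw [he, Finset.card_univ, Fintype.card_fin] at hcard
      omega
    obtain ⟨r, hr⟩ : ∃ r : Fin R, ¬ t2 < (x r - a) ^ 2 := by
      by_contra hall
      push_neg at hall
      exact hne (Finset.eq_univ_iff_forall.2 (fun r => Finset.mem_filter.2 ⟨Finset.mem_univ r, hall r⟩))
    have := le_of_not_gt hr
    nlinarith [sq_nonneg (x r - a)]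
  set s := Real.sqrt t2 with hs
  have hs0 : 0 ≤ s := Real.sqrt_nonneg _
  have hs2 : s ^ 2 = t2 := Real.sq_sqrt ht2
  set σ := Tuple.sort x with hσ
  have hmono : Monotone (x ∘ σ) := Tuple.monotone_sort x
  have hj1 : (R + 1) / 2 - 1 < R := by omega
  have hj2 : R / 2 < R := by omega
  set j1 : Fin R := ⟨(R + 1) / 2 - 1, hj1⟩ with hj1d
  set j2 : Fin R := ⟨R / 2, hj2⟩ with hj2d
  have hj12 : j1 ≤ j2 := by
    simp only [hj1d, hj2d, Fin.mk_le_mk]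
    omega
  have hmed : med x = (x (σ j1) + x (σ j2)) / 2 := by
    unfold med
    rw [dif_neg hRR]
  have h1 : a - s ≤ x (σ j1) := by
    by_contra hcon
    push_neg at hcon
    have hsub : ∀ j ∈ Finset.Iic j1, σ j ∈ filter (fun r => t2 < (x r - a) ^ 2) univ := by
      intro j hj
      have hle : x (σ j) ≤ x (σ j1) := hmono (Finset.mem_Iic.1 hj)
      have hlt : s < a - x (σ j) := by linarith
      have := pow_lt_pow_left₀ hlt hs0 (two_ne_zero)
      rw [hs2] at this
      refine Finset.mem_filter.2 ⟨Finset.mem_univ _, ?_⟩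
      nlinarith
    have hinj : Set.InjOn σ ↑(Finset.Iic j1) := fun u _ v _ huv => σ.injective huv
    have hcle := Finset.card_le_card_of_injOn σ hsub hinj
    rw [Fin.card_Iic] at hcle
    simp only [hj1d] at hcle
    omega
  have h2 : x (σ j2) ≤ a + s := by
    by_contra hcon
    push_neg at hcon
    have hsub : ∀ j ∈ Finset.Ici j2, σ j ∈ filter (fun r => t2 < (x r - a) ^ 2) univ := by
      intro j hj
      have hle : x (σ j2) ≤ x (σ j) := hmono (Finset.mem_Ici.1 hj)
      have hlt : s < x (σ j) - a := by linarith
      have := pow_lt_pow_left₀ hlt hs0 (two_ne_zero)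
      rw [hs2] at this
      exact Finset.mem_filter.2 ⟨Finset.mem_univ _, this⟩
    have hinj : Set.InjOn σ ↑(Finset.Ici j2) := fun u _ v _ huv => σ.injective huv
    have hcle := Finset.card_le_card_of_injOn σ hsub hinj
    rw [Fin.card_Ici] at hcle
    simp only [hj2d] at hcle
    omega
  have h12 : x (σ j1) ≤ x (σ j2) := hmono hj12
  rw [hmed, ← hs2]
  apply sq_le_sq' <;> linarith

/-- Randomness of a count-median-of-means sketch: `R` independent count-mean sketches. -/
abbrev MoMSpace (d P C R : ℕ) : Type := Fin R → SketchSpace d P C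

/-- Median-of-means unsketching: `U(y)_q = med_r ((S^{(r)})ᵀ y^{(r)})_q`. -/
def MoMU {d P C R : ℕ} (ω : MoMSpace d P C R) (y : Fin R → Fin P × Fin C → ℝ) : Fin d → ℝ :=
  fun q => med fun r => SkT (ω r) (y r) q


open Finset in
lemma card_pair_collision {d P C : ℕ} [NeZero C] (p : Fin P) {i q : Fin d} (hiq : i ≠ q) :
    (#(filter (fun ω : SketchSpace d P C => ω.1 p i = ω.1 p q) univ) : ℝ)
      = (Fintype.card (Fin P → Fin d → Fin C) : ℝ) / C * Fintype.card (Fin P → Fin d → Bool) := by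
  rw [← Finset.sum_boole (fun ω : SketchSpace d P C => ω.1 p i = ω.1 p q) univ]
  rw [Fintype.sum_prod_type]
  dsimp only
  have inner : ∀ h : Fin P → Fin d → Fin C,
      (∑ _s : Fin P → Fin d → Bool, (if h p i = h p q then (1 : ℝ) else 0))
      = (Fintype.card (Fin P → Fin d → Bool) : ℝ) * (if h p i = h p q then (1 : ℝ) else 0) := by
    intro h
    rw [Finset.sum_const, Finset.card_univ, nsmul_eq_mul]
  rw [Finset.sum_congr rfl (fun h _ => inner h), ← Finset.mul_sum, sum_collision p hiq]
  ring

set_option maxHeartbeats 2000000 in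
open Finset in
lemma per_rep_bad {d P C k : ℕ} [NeZero C] (hP : 1 ≤ P) (hk : 1 ≤ k) (hkd : k ≤ d)
    {α : ℝ} (hα0 : 0 < α)
    (hC1 : 8 * (P : ℝ) * k ≤ C) (hC2 : 8 * (k : ℝ) / ((P : ℝ) * α) ≤ C)
    (z : Fin d → ℝ) (q : Fin d) :
    4 * (#(filter (fun ω : SketchSpace d P C =>
        α * tailNorm k z ^ 2 / k < (SkT ω (Sk ω z) q - z q) ^ 2) univ) : ℝ)
      ≤ Fintype.card (SketchSpace d P C) := by
  have hP0 : (0 : ℝ) < P := by exact_mod_cast hP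
  have hk0 : (0 : ℝ) < k := by exact_mod_cast hk
  have hC0 : (0 : ℝ) < C := by nlinarith
  obtain ⟨I, hIcard, hItail⟩ := tail_exists hkd z
  set t2 := α * tailNorm k z ^ 2 / k with ht2def
  have htail0 : 0 ≤ tailNorm k z ^ 2 := sq_nonneg _
  have ht20 : 0 ≤ t2 := by positivity
  set NH := Fintype.card (Fin P → Fin d → Fin C) with hNH
  set NS := Fintype.card (Fin P → Fin d → Bool) with hNS
  have hNcard : (Fintype.card (SketchSpace d P C) : ℝ) = (NH : ℝ) * NS := by
    rw [show Fintype.card (SketchSpace d P C) = NH * NS from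
      Fintype.card_prod _ _]
    push_cast
    ring
  set Iq := I.erase q with hIq
  set L := (univ \ I).erase q with hLdef
  have hqL : ∀ i ∈ L, i ≠ q := fun i hi => (Finset.mem_erase.1 hi).1
  have hLsub : L ⊆ univ \ I := Finset.erase_subset _ _
  have hsplit : (univ : Finset (Fin d)).erase q = Iq ∪ L := by
    ext i
    simp only [hIq, hLdef, Finset.mem_erase, Finset.mem_union, Finset.mem_sdiff,
      Finset.mem_univ, true_and, and_true]
    tauto
  have hdisj : Disjoint Iq L := by
    rw [Finset.disjoint_left]
    intro i hi1 hi2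
    exact (Finset.mem_sdiff.1 (hLsub hi2)).2 (Finset.mem_of_mem_erase hi1)
  set Bad := filter (fun ω : SketchSpace d P C =>
      t2 < (SkT ω (Sk ω z) q - z q) ^ 2) univ with hBad
  set H := filter (fun ω : SketchSpace d P C =>
      ∃ p : Fin P, ∃ i ∈ Iq, ω.1 p i = ω.1 p q) univ with hH
  set M := filter (fun ω : SketchSpace d P C =>
      t2 < ((P : ℝ)⁻¹ * ∑ c ∈ univ ×ˢ L, sgn (ω.2 c.1 q) * sgn (ω.2 c.1 c.2) *
        (if ω.1 c.1 c.2 = ω.1 c.1 q then (1 : ℝ) else 0) * z c.2) ^ 2) univ with hM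
  -- Bad ⊆ H ∪ M
  have hBadsub : Bad ⊆ H ∪ M := by
    intro ω hω
    rw [Finset.mem_union]
    by_cases hωH : ω ∈ H
    · exact Or.inl hωH
    · right
      rw [hH, Finset.mem_filter] at hωH
      push_neg at hωH
      have hnocoll : ∀ p : Fin P, ∀ i ∈ Iq, ω.1 p i ≠ ω.1 p q :=
        fun p i hi => hωH (Finset.mem_univ ω) p i hi
      rw [hBad, Finset.mem_filter] at hω
      have herr := skt_sk_sub hP ω z q
      have hsum : ∀ p : Fin P,
          ∑ i ∈ univ.erase q, sgn (ω.2 p q) * sgn (ω.2 p i) *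
            (if ω.1 p i = ω.1 p q then (1 : ℝ) else 0) * z i
          = ∑ i ∈ L, sgn (ω.2 p q) * sgn (ω.2 p i) *
            (if ω.1 p i = ω.1 p q then (1 : ℝ) else 0) * z i := by
        intro p
        rw [hsplit, Finset.sum_union hdisj, Finset.sum_eq_zero, zero_add]
        intro i hi
        rw [if_neg (hnocoll p i hi)]
        ring
      rw [Finset.sum_congr rfl (fun p _ => hsum p), ← Finset.sum_product'] at herr
      rw [hM, Finset.mem_filter]
      refine ⟨Finset.mem_univ ω, ?_⟩
      rw [← herr]
      exact hω.2
  -- count H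
  have hHcount : 8 * (#H : ℝ) ≤ (Fintype.card (SketchSpace d P C) : ℝ) := by
    have hsub : H ⊆ univ.biUnion (fun p : Fin P => Iq.biUnion (fun i =>
        filter (fun ω : SketchSpace d P C => ω.1 p i = ω.1 p q) univ)) := by
      intro ω hω
      rw [hH, Finset.mem_filter] at hω
      obtain ⟨-, p, i, hi, hcoll⟩ := hω
      exact Finset.mem_biUnion.2 ⟨p, Finset.mem_univ p, Finset.mem_biUnion.2
        ⟨i, hi, Finset.mem_filter.2 ⟨Finset.mem_univ ω, hcoll⟩⟩⟩
    have hcard1 : (#H : ℝ) ≤ ∑ p : Fin P, ∑ i ∈ Iq,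
        (#(filter (fun ω : SketchSpace d P C => ω.1 p i = ω.1 p q) univ) : ℝ) := by
      have h1 := Finset.card_le_card hsub
      have h2 := Finset.card_biUnion_le (s := (univ : Finset (Fin P))) (t := fun p => Iq.biUnion
        (fun i => filter (fun ω : SketchSpace d P C => ω.1 p i = ω.1 p q) univ))
      have h3 : ∀ p : Fin P, #(Iq.biUnion (fun i =>
          filter (fun ω : SketchSpace d P C => ω.1 p i = ω.1 p q) univ))
          ≤ ∑ i ∈ Iq, #(filter (fun ω : SketchSpace d P C => ω.1 p i = ω.1 p q) univ) :=
        fun p => Finset.card_biUnion_le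
      have h4 : #H ≤ ∑ p : Fin P, ∑ i ∈ Iq,
          #(filter (fun ω : SketchSpace d P C => ω.1 p i = ω.1 p q) univ) :=
        le_trans h1 (le_trans h2 (Finset.sum_le_sum (fun p _ => h3 p)))
      exact_mod_cast h4
    have hval : ∀ p : Fin P, ∀ i ∈ Iq,
        (#(filter (fun ω : SketchSpace d P C => ω.1 p i = ω.1 p q) univ) : ℝ)
        = (NH : ℝ) / C * NS :=
      fun p i hi => card_pair_collision p ((Finset.mem_erase.1 hi).1)
    have hcard2 : (#H : ℝ) ≤ (P : ℝ) * ((k : ℝ) * ((NH : ℝ) / C * NS)) := by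
      refine le_trans hcard1 ?_
      rw [Finset.sum_congr rfl (fun p hp => Finset.sum_congr rfl (fun i hi => hval p i hi))]
      rw [Finset.sum_const, Finset.sum_const, Finset.card_univ, Fintype.card_fin,
        nsmul_eq_mul, nsmul_eq_mul]
      have hIqk : (#Iq : ℝ) ≤ k := by
        have h5 : #Iq ≤ #I := Finset.card_erase_le
        rw [hIcard] at h5
        exact_mod_cast h5
      have hc : (0 : ℝ) ≤ (NH : ℝ) / C * NS := by positivity
      exact mul_le_mul_of_nonneg_left (mul_le_mul_of_nonneg_right hIqk hc) (le_of_lt hP0)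
    rw [hNcard]
    have hX : (P : ℝ) * ((k : ℝ) * ((NH : ℝ) / C * NS)) * 8 ≤ (NH : ℝ) * NS := by
      rw [show (P : ℝ) * ((k : ℝ) * ((NH : ℝ) / C * NS)) * 8
          = 8 * (P : ℝ) * k * ((NH : ℝ) * NS) / C by field_simp]
      rw [div_le_iff₀ hC0]
      have hnn : (0 : ℝ) ≤ (NH : ℝ) * NS := by positivity
      nlinarith
    nlinarith
  -- count M
  have hMcount : 8 * (#M : ℝ) ≤ (Fintype.card (SketchSpace d P C) : ℝ) := by
    have hsum_sq := sum_EL_sq (P := P) (C := C) z q L hqL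
    have hzL : ∑ i ∈ L, z i ^ 2 ≤ tailNorm k z ^ 2 := by
      refine le_trans ?_ hItail
      exact Finset.sum_le_sum_of_subset_of_nonneg hLsub (fun i _ _ => sq_nonneg (z i))
    have hmarkov : t2 * (#M : ℝ) ≤ ∑ ω : SketchSpace d P C,
        ((P : ℝ)⁻¹ * ∑ c ∈ univ ×ˢ L, sgn (ω.2 c.1 q) * sgn (ω.2 c.1 c.2) *
          (if ω.1 c.1 c.2 = ω.1 c.1 q then (1 : ℝ) else 0) * z c.2) ^ 2 := by
      calc t2 * (#M : ℝ) = ∑ _ω ∈ M, t2 := by rw [Finset.sum_const, nsmul_eq_mul]; ring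
        _ ≤ ∑ ω ∈ M, ((P : ℝ)⁻¹ * ∑ c ∈ univ ×ˢ L, sgn (ω.2 c.1 q) * sgn (ω.2 c.1 c.2) *
              (if ω.1 c.1 c.2 = ω.1 c.1 q then (1 : ℝ) else 0) * z c.2) ^ 2 := by
            refine Finset.sum_le_sum (fun ω hω => ?_)
            rw [hM, Finset.mem_filter] at hω
            exact le_of_lt hω.2
        _ ≤ _ := Finset.sum_le_sum_of_subset_of_nonneg (Finset.subset_univ M)
              (fun ω _ _ => sq_nonneg _)
    have hsum_eval : ∑ ω : SketchSpace d P C,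
        ((P : ℝ)⁻¹ * ∑ c ∈ univ ×ˢ L, sgn (ω.2 c.1 q) * sgn (ω.2 c.1 c.2) *
          (if ω.1 c.1 c.2 = ω.1 c.1 q then (1 : ℝ) else 0) * z c.2) ^ 2
        = (P : ℝ)⁻¹ * ((Fintype.card (SketchSpace d P C) : ℝ) / C) * ∑ i ∈ L, z i ^ 2 := by
      have e : ∀ ω : SketchSpace d P C,
          ((P : ℝ)⁻¹ * ∑ c ∈ univ ×ˢ L, sgn (ω.2 c.1 q) * sgn (ω.2 c.1 c.2) *
            (if ω.1 c.1 c.2 = ω.1 c.1 q then (1 : ℝ) else 0) * z c.2) ^ 2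
          = ((P : ℝ)⁻¹)^2 * (∑ c ∈ univ ×ˢ L, sgn (ω.2 c.1 q) * sgn (ω.2 c.1 c.2) *
            (if ω.1 c.1 c.2 = ω.1 c.1 q then (1 : ℝ) else 0) * z c.2) ^ 2 := fun ω => by ring
      rw [Finset.sum_congr rfl (fun ω _ => e ω), ← Finset.mul_sum, hsum_sq]
      field_simp
    set Ncard := (Fintype.card (SketchSpace d P C) : ℝ) with hNc
    have hNn : (0 : ℝ) ≤ Ncard := Nat.cast_nonneg _
    have h1 : (P : ℝ)⁻¹ * (Ncard / C) * ∑ i ∈ L, z i ^ 2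
        ≤ (P : ℝ)⁻¹ * (Ncard / C) * tailNorm k z ^ 2 :=
      mul_le_mul_of_nonneg_left hzL (by positivity)
    have hPCα : 8 * (k : ℝ) ≤ (P : ℝ) * C * α := by
      rw [div_le_iff₀ (by positivity)] at hC2
      nlinarith
    have h2 : (P : ℝ)⁻¹ * (Ncard / C) * tailNorm k z ^ 2
        ≤ Ncard / 8 * (α * tailNorm k z ^ 2 / k) := by
      rw [← sub_nonneg]
      have e : Ncard / 8 * (α * tailNorm k z ^ 2 / k)
          - (P : ℝ)⁻¹ * (Ncard / C) * tailNorm k z ^ 2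
          = Ncard * tailNorm k z ^ 2 * (((P : ℝ) * C * α - 8 * k) / (8 * k * P * C)) := by
        field_simp
      rw [e]
      exact mul_nonneg (mul_nonneg hNn htail0)
        (div_nonneg (by linarith) (by positivity))
    rw [hsum_eval] at hmarkov
    have hfinal : t2 * (#M : ℝ) ≤ Ncard / 8 * t2 := by
      rw [ht2def]
      exact le_trans hmarkov (le_trans h1 h2)
    rcases eq_or_lt_of_le ht20 with heq | hpos
    · -- t2 = 0 : M is empty
      have hMempty : M = ∅ := by
        have hsumle : ∑ ω : SketchSpace d P C,
            ((P : ℝ)⁻¹ * ∑ c ∈ univ ×ˢ L, sgn (ω.2 c.1 q) * sgn (ω.2 c.1 c.2) *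
              (if ω.1 c.1 c.2 = ω.1 c.1 q then (1 : ℝ) else 0) * z c.2) ^ 2 ≤ 0 := by
          rw [hsum_eval]
          have := le_trans h1 h2
          rw [ht2def] at heq
          rw [← heq] at this
          simpa using this
        have hzero := Finset.sum_eq_zero_iff_of_nonneg
          (fun ω _ => sq_nonneg _) |>.1 (le_antisymm hsumle (Finset.sum_nonneg (fun ω _ => sq_nonneg _)))
        rw [Finset.eq_empty_iff_forall_notMem]
        intro ω hω
        rw [hM, Finset.mem_filter] at hω
        have := hzero ω (Finset.mem_univ ω)
        rw [this] at hω
        exact absurd hω.2 (by rw [← heq]; norm_num)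
      rw [hMempty]
      simp only [Finset.card_empty, Nat.cast_zero, mul_zero]
      exact hNn
    · have h3 : (#M : ℝ) * t2 ≤ Ncard / 8 * t2 := by
        rw [mul_comm] at hfinal
        exact hfinal
      have h4 := le_of_mul_le_mul_right h3 hpos
      linarith
  -- combine
  have hBadcard : (#Bad : ℝ) ≤ (#H : ℝ) + (#M : ℝ) := by
    have := le_trans (Finset.card_le_card hBadsub) (Finset.card_union_le H M)
    exact_mod_cast this
  have : 8 * (#Bad : ℝ) ≤ 2 * (Fintype.card (SketchSpace d P C) : ℝ) := by linarith
  linarith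


open Finset in
lemma count_mgf {Ω : Type*} [Fintype Ω] [DecidableEq Ω] (Bad : Finset Ω) (R m : ℕ)
    (hb : 4 * #Bad ≤ Fintype.card Ω) :
    3 ^ m * 2 ^ R *
      #(filter (fun ω : Fin R → Ω => m ≤ #(filter (fun r => ω r ∈ Bad) univ)) univ)
      ≤ 3 ^ R * Fintype.card Ω ^ R := by
  classical
  set N := Fintype.card Ω with hN
  set b := #Bad with hbdef
  set SS := filter (fun ω : Fin R → Ω => m ≤ #(filter (fun r => ω r ∈ Bad) univ)) univ with hSS
  have hbN : b ≤ N := by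
    have := Finset.card_le_card (Finset.subset_univ Bad)
    rw [Finset.card_univ] at this
    omega
  clear_value N b SS
  set w : Ω → ℕ := fun x => if x ∈ Bad then 3 else 1 with hw
  clear_value w
  have hprod : ∀ ω : Fin R → Ω,
      ∏ r : Fin R, w (ω r) = 3 ^ #(filter (fun r => ω r ∈ Bad) univ) := by
    intro ω
    have e : ∀ r : Fin R, w (ω r) = 3 ^ (if ω r ∈ Bad then 1 else 0) := by
      intro r
      simp only [hw]
      by_cases hmem : ω r ∈ Bad
      · rw [if_pos hmem, if_pos hmem, pow_one]
      · rw [if_neg hmem, if_neg hmem, pow_zero]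
    rw [Finset.prod_congr rfl (fun r _ => e r), Finset.prod_pow_eq_pow_sum]
    congr 1
    rw [Finset.card_filter]
  have hsum_prod : ∑ ω : Fin R → Ω, ∏ r : Fin R, w (ω r) = (∑ x : Ω, w x) ^ R := by
    have := Finset.prod_univ_sum (fun _ : Fin R => (univ : Finset Ω)) (fun _ x => w x)
    rw [Fintype.piFinset_univ] at this
    rw [← this, Finset.prod_const, Finset.card_univ, Fintype.card_fin]
  have hsum_w : ∑ x : Ω, w x = 3 * b + (N - b) := by
    simp only [hw]
    rw [Finset.sum_ite, Finset.sum_const, Finset.sum_const, smul_eq_mul, smul_eq_mul, mul_one]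
    have e1 : filter (fun x => x ∈ Bad) (univ : Finset Ω) = Bad := by ext x; simp
    have e2 : filter (fun x => ¬ x ∈ Bad) (univ : Finset Ω) = univ \ Bad := by ext x; simp
    rw [e1, e2, Finset.card_sdiff_of_subset (Finset.subset_univ Bad), Finset.card_univ]
    clear hprod hsum_prod hw
    omega
  have hstepB : 3 ^ m * #SS ≤ (3 * b + (N - b)) ^ R := by
    rw [← hsum_w, ← hsum_prod]
    have hlb := Finset.card_nsmul_le_sum SS
      (fun ω => ∏ r : Fin R, w (ω r)) (3 ^ m)
      (fun ω hω => by
        show 3 ^ m ≤ ∏ r : Fin R, w (ω r)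
        rw [hprod ω]
        refine Nat.pow_le_pow_right (by norm_num) ?_
        have := Finset.mem_filter.1 (by rw [hSS] at hω; exact hω)
        exact this.2)
    rw [smul_eq_mul, mul_comm] at hlb
    refine le_trans hlb (Finset.sum_le_sum_of_subset ?_)
    rw [hSS]
    exact Finset.filter_subset _ _
  have hfin1 : 2 ^ R * (3 ^ m * #SS) ≤ 2 ^ R * (3 * b + (N - b)) ^ R :=
    Nat.mul_le_mul_left _ hstepB
  have hfin2 : 2 ^ R * (3 * b + (N - b)) ^ R = (2 * (3 * b + (N - b))) ^ R :=
    (mul_pow 2 (3 * b + (N - b)) R).symm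
  have harith : 2 * (3 * b + (N - b)) ≤ 3 * N := by
    clear hprod hsum_prod hsum_w hstepB hfin1 hfin2 hw
    omega
  have hfin3 : (2 * (3 * b + (N - b))) ^ R ≤ (3 * N) ^ R :=
    Nat.pow_le_pow_left harith R
  have hfin4 : (3 * N) ^ R = 3 ^ R * N ^ R := mul_pow 3 N R
  have e6 : 3 ^ m * 2 ^ R * #SS = 2 ^ R * (3 ^ m * #SS) := by ring
  rw [e6]
  exact le_trans hfin1 (le_trans (le_of_eq hfin2) (le_trans hfin3 (le_of_eq hfin4)))

lemma log_four_thirds : (1 : ℝ) / 4 ≤ Real.log (4 / 3) := by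
  have h1 : (3 : ℝ) / 4 ≤ Real.exp (-(1 / 4)) := by
    have := Real.add_one_le_exp (-(1 / 4) : ℝ)
    linarith
  have h2 : Real.log (3 / 4) ≤ -(1 / 4) :=
    (Real.log_le_iff_le_exp (by norm_num)).2 h1
  have h3 : Real.log (4 / 3) = - Real.log (3 / 4) := by
    rw [← Real.log_inv]
    norm_num
  linarith

lemma numeric_bound {d R : ℕ} {β : ℝ} (hd : 1 ≤ d) (hβ0 : 0 < β) (hβ1 : β < 1)
    (hR : 8 * Real.log (2 * d / β) ≤ (R : ℝ)) :
    (d : ℝ) * ((3 : ℝ) ^ (R / 2) / (2 : ℝ) ^ R) ≤ β := by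
  have hd0 : (0 : ℝ) < d := by exact_mod_cast hd
  have hdβ1 : 1 < (d : ℝ) / β := by
    rw [lt_div_iff₀ hβ0]
    have : (1 : ℝ) ≤ d := by exact_mod_cast hd
    nlinarith
  have hlog_pos : 0 < Real.log ((d : ℝ) / β) := Real.log_pos hdβ1
  have hmono : Real.log ((d : ℝ) / β) ≤ Real.log (2 * d / β) := by
    apply Real.log_le_log (by positivity)
    rw [div_le_div_iff₀ hβ0 hβ0]
    nlinarith
  have hR0 : (0 : ℝ) ≤ R := Nat.cast_nonneg _
  have hx : (0 : ℝ) < (d : ℝ) / β := by positivity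
  have hkey : ((d : ℝ) / β) ^ 2 ≤ ((4 : ℝ) / 3) ^ R := by
    have e1 : ((d : ℝ) / β) ^ 2 = Real.exp (2 * Real.log ((d : ℝ) / β)) := by
      rw [two_mul, Real.exp_add, Real.exp_log hx, sq]
    have e2 : ((4 : ℝ) / 3) ^ R = Real.exp (Real.log (4 / 3) * R) := by
      rw [← Real.rpow_natCast ((4 : ℝ) / 3) R, Real.rpow_def_of_pos (by norm_num)]
    rw [e1, e2]
    apply Real.exp_le_exp.2
    have h1 : (1 / 4 : ℝ) * R ≤ Real.log (4 / 3) * R :=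
      mul_le_mul_of_nonneg_right log_four_thirds hR0
    linarith
  have h4R : (0 : ℝ) < (4 : ℝ) ^ R := by positivity
  have hkey' : (d : ℝ) ^ 2 * (3 : ℝ) ^ R ≤ β ^ 2 * (4 : ℝ) ^ R := by
    rw [div_pow, div_pow, div_le_div_iff₀ (by positivity) (by positivity)] at hkey
    linarith
  have h2R : (((2 : ℝ) ^ R) : ℝ) ^ 2 = (4 : ℝ) ^ R := by
    rw [← pow_mul, mul_comm R 2, pow_mul]
    norm_num
  have hsq : ((d : ℝ) * ((3 : ℝ) ^ (R / 2) / (2 : ℝ) ^ R)) ^ 2 ≤ β ^ 2 := by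
    have e3 : ((d : ℝ) * ((3 : ℝ) ^ (R / 2) / (2 : ℝ) ^ R)) ^ 2
        = (d : ℝ) ^ 2 * (((3 : ℝ) ^ (R / 2)) ^ 2) / ((2 : ℝ) ^ R) ^ 2 := by
      ring
    rw [e3, h2R, ← pow_mul]
    have e4 : (3 : ℝ) ^ (R / 2 * 2) ≤ (3 : ℝ) ^ R :=
      pow_le_pow_right₀ (by norm_num) (by omega)
    have e5 : (d : ℝ) ^ 2 * (3 : ℝ) ^ (R / 2 * 2) ≤ (d : ℝ) ^ 2 * (3 : ℝ) ^ R :=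
      mul_le_mul_of_nonneg_left e4 (sq_nonneg _)
    rw [div_le_iff₀ h4R]
    linarith
  exact (abs_le_of_sq_le_sq' hsq hβ0.le).2

set_option maxHeartbeats 2000000 in
/-- `ℓ∞` guarantee for the (noiseless) count-median-of-means sketch:
with probability at least `1 − β`, simultaneously for all coordinates `q`,
`(U(S(z))_q − z_q)² ≤ α‖z_tail(k)‖²/k`. -/
theorem count_median_of_means_linf
    {d P k : ℕ} (hd : 1 ≤ d) (hP : 1 ≤ P) (hk : 1 ≤ k) (hkd : k ≤ d)
    {α β : ℝ} (hα0 : 0 < α) (hα1 : α ≤ 1) (hβ0 : 0 < β) (hβ1 : β < 1)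
    {C : ℕ} (hC : max (8 * P * k : ℝ) (8 * k / (P * α)) ≤ (C : ℝ))
    {R : ℕ} (hR : 8 * Real.log (2 * d / β) ≤ (R : ℝ))
    (z : Fin d → ℝ) :
    1 - ENNReal.ofReal β ≤
      unifMeasure (MoMSpace d P C R)
        {ω | ∀ q : Fin d,
          (MoMU ω (fun r => Sk (ω r) z) q - z q) ^ 2 ≤ α * tailNorm k z ^ 2 / k} := by
  have hP0 : (0 : ℝ) < P := by exact_mod_cast hP
  have hk0 : (0 : ℝ) < k := by exact_mod_cast hk
  have hd0 : (0 : ℝ) < d := by exact_mod_cast hd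
  have hP1 : (1 : ℝ) ≤ P := by exact_mod_cast hP
  have hk1 : (1 : ℝ) ≤ k := by exact_mod_cast hk
  have hC1 : 8 * (P : ℝ) * k ≤ C := le_trans (le_max_left _ _) hC
  have hC2 : 8 * (k : ℝ) / ((P : ℝ) * α) ≤ C := le_trans (le_max_right _ _) hC
  have hC8 : (8 : ℝ) ≤ C := by nlinarith
  haveI : NeZero C := ⟨by
    intro h
    rw [h] at hC8
    norm_num at hC8⟩
  have hd1 : (1 : ℝ) ≤ d := by exact_mod_cast hd
  have hdβ : (1 : ℝ) < 2 * d / β := by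
    rw [lt_div_iff₀ hβ0]
    nlinarith
  have hR1 : 1 ≤ R := by
    by_contra hR0
    have hReq : R = 0 := by omega
    rw [hReq] at hR
    simp only [Nat.cast_zero] at hR
    have := Real.log_pos hdβ
    linarith
  set t2 := α * tailNorm k z ^ 2 / k with ht2
  set Bad : Fin d → Finset (SketchSpace d P C) := fun q =>
    Finset.filter (fun ω₀ => t2 < (SkT ω₀ (Sk ω₀ z) q - z q) ^ 2) Finset.univ with hBadDef
  have hbad4 : ∀ q, 4 * (Bad q).card ≤ Fintype.card (SketchSpace d P C) := by
    intro q
    have h := per_rep_bad (C := C) hP hk hkd hα0 hC1 hC2 z q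
    rw [← ht2] at h
    rw [hBadDef]
    exact_mod_cast h
  set m := (R + 1) / 2 with hm
  set SQ : Fin d → Finset (MoMSpace d P C R) := fun q =>
    Finset.filter (fun ω => m ≤ ((Finset.univ : Finset (Fin R)).filter
      (fun r => ω r ∈ Bad q)).card) Finset.univ with hSQ
  have hcount : ∀ q, 3 ^ m * 2 ^ R * (SQ q).card
      ≤ 3 ^ R * (Fintype.card (SketchSpace d P C)) ^ R :=
    fun q => count_mgf (Bad q) R m (hbad4 q)
  have hNS0 : (0 : ℝ) < (Fintype.card (SketchSpace d P C) : ℝ) := by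
    exact_mod_cast Fintype.card_pos
  have hcard_real : ∀ q, ((SQ q).card : ℝ)
      ≤ (3 : ℝ) ^ (R / 2) / (2 : ℝ) ^ R * ((Fintype.card (SketchSpace d P C) : ℝ)) ^ R := by
    intro q
    have hcast : (3 : ℝ) ^ m * 2 ^ R * ((SQ q).card : ℝ)
        ≤ (3 : ℝ) ^ R * ((Fintype.card (SketchSpace d P C) : ℝ)) ^ R := by
      exact_mod_cast hcount q
    have h3R : (3 : ℝ) ^ R = (3 : ℝ) ^ m * (3 : ℝ) ^ (R / 2) := by
      rw [← pow_add]
      congr 1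
      omega
    rw [h3R] at hcast
    rw [div_mul_eq_mul_div, le_div_iff₀ (by positivity : (0 : ℝ) < (2 : ℝ) ^ R)]
    have h3m : (0 : ℝ) < (3 : ℝ) ^ m := by positivity
    have h1 : (3 : ℝ) ^ m * (((SQ q).card : ℝ) * 2 ^ R)
        ≤ (3 : ℝ) ^ m * ((3 : ℝ) ^ (R / 2) * ((Fintype.card (SketchSpace d P C) : ℝ)) ^ R) := by
      calc (3 : ℝ) ^ m * (((SQ q).card : ℝ) * 2 ^ R)
          = (3 : ℝ) ^ m * 2 ^ R * ((SQ q).card : ℝ) := by ring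
        _ ≤ (3 : ℝ) ^ m * (3 : ℝ) ^ (R / 2) * ((Fintype.card (SketchSpace d P C) : ℝ)) ^ R :=
            hcast
        _ = (3 : ℝ) ^ m * ((3 : ℝ) ^ (R / 2) * ((Fintype.card (SketchSpace d P C) : ℝ)) ^ R) := by
            ring
    exact le_of_mul_le_mul_left h1 h3m
  have hsub : ∀ q : Fin d,
      {ω : MoMSpace d P C R | t2 < (MoMU ω (fun r => Sk (ω r) z) q - z q) ^ 2} ⊆ ↑(SQ q) := by
    intro q ω hω
    simp only [Set.mem_setOf_eq] at hω
    rw [Finset.mem_coe, hSQ]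
    simp only [Finset.mem_filter]
    refine ⟨Finset.mem_univ ω, ?_⟩
    by_contra hlt
    push_neg at hlt
    have hfiltereq : Finset.filter (fun r : Fin R =>
        t2 < ((fun r => SkT (ω r) (Sk (ω r) z) q) r - z q) ^ 2) Finset.univ
        = Finset.filter (fun r => ω r ∈ Bad q) Finset.univ := by
      apply Finset.filter_congr
      intro r _
      rw [hBadDef]
      simp only [Finset.mem_filter, Finset.mem_univ, true_and]
    have hmed := med_close hR1 (fun r => SkT (ω r) (Sk (ω r) z) q) (z q) t2
      (by rw [hfiltereq]; exact hlt)
    have hMoM : MoMU ω (fun r => Sk (ω r) z) q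
        = med (fun r => SkT (ω r) (Sk (ω r) z) q) := rfl
    rw [hMoM] at hω
    exact absurd hω (not_lt.2 hmed)
  -- measure computations
  have hμfin : ∀ s : Finset (MoMSpace d P C R),
      unifMeasure (MoMSpace d P C R) ↑s
        = (Fintype.card (MoMSpace d P C R) : ℝ≥0∞)⁻¹ * s.card := by
    intro s
    unfold unifMeasure
    rw [Measure.smul_apply, smul_eq_mul, Measure.count_apply_finset]
  have hμuniv : unifMeasure (MoMSpace d P C R) Set.univ = 1 := by
    rw [← Finset.coe_univ, hμfin, Finset.card_univ]
    exact ENNReal.inv_mul_cancel (by exact_mod_cast Fintype.card_ne_zero)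
      (ENNReal.natCast_ne_top _)
  have hcardM : Fintype.card (MoMSpace d P C R)
      = (Fintype.card (SketchSpace d P C)) ^ R := by
    rw [Fintype.card_fun, Fintype.card_fin]
  have hM0 : (0 : ℝ) < (Fintype.card (MoMSpace d P C R) : ℝ) := by
    exact_mod_cast Fintype.card_pos
  -- total union bound
  have hUB : unifMeasure (MoMSpace d P C R)
      (⋃ q : Fin d, {ω : MoMSpace d P C R |
        t2 < (MoMU ω (fun r => Sk (ω r) z) q - z q) ^ 2}) ≤ ENNReal.ofReal β := by
    refine le_trans (measure_iUnion_le _) ?_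
    rw [tsum_fintype]
    have hstep : ∀ q : Fin d, unifMeasure (MoMSpace d P C R)
        {ω : MoMSpace d P C R | t2 < (MoMU ω (fun r => Sk (ω r) z) q - z q) ^ 2}
        ≤ (Fintype.card (MoMSpace d P C R) : ℝ≥0∞)⁻¹ * ((SQ q).card : ℝ≥0∞) := by
      intro q
      refine le_trans (measure_mono (hsub q)) ?_
      rw [hμfin]
    refine le_trans (Finset.sum_le_sum (fun q _ => hstep q)) ?_
    rw [← Finset.mul_sum]
    have hT : (∑ q : Fin d, ((SQ q).card : ℝ≥0∞)) = ((∑ q : Fin d, (SQ q).card : ℕ) : ℝ≥0∞) := by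
      rw [Nat.cast_sum]
    rw [hT]
    have hreal : ((∑ q : Fin d, (SQ q).card : ℕ) : ℝ)
        ≤ β * (Fintype.card (MoMSpace d P C R) : ℝ) := by
      have hsum : ((∑ q : Fin d, (SQ q).card : ℕ) : ℝ)
          ≤ (d : ℝ) * ((3 : ℝ) ^ (R / 2) / (2 : ℝ) ^ R
            * ((Fintype.card (SketchSpace d P C) : ℝ)) ^ R) := by
        rw [Nat.cast_sum]
        refine le_trans (Finset.sum_le_sum (fun q _ => hcard_real q)) ?_
        rw [Finset.sum_const, Finset.card_univ, Fintype.card_fin, nsmul_eq_mul]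
      have hnum := numeric_bound hd hβ0 hβ1 hR
      have hpow0 : (0 : ℝ) ≤ ((Fintype.card (SketchSpace d P C) : ℝ)) ^ R := by positivity
      have : (d : ℝ) * ((3 : ℝ) ^ (R / 2) / (2 : ℝ) ^ R
            * ((Fintype.card (SketchSpace d P C) : ℝ)) ^ R)
          ≤ β * ((Fintype.card (SketchSpace d P C) : ℝ)) ^ R := by
        have := mul_le_mul_of_nonneg_right hnum hpow0
        calc (d : ℝ) * ((3 : ℝ) ^ (R / 2) / (2 : ℝ) ^ R
              * ((Fintype.card (SketchSpace d P C) : ℝ)) ^ R)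
            = (d : ℝ) * ((3 : ℝ) ^ (R / 2) / (2 : ℝ) ^ R)
              * ((Fintype.card (SketchSpace d P C) : ℝ)) ^ R := by ring
          _ ≤ β * ((Fintype.card (SketchSpace d P C) : ℝ)) ^ R := this
      have hcM : (Fintype.card (MoMSpace d P C R) : ℝ)
          = ((Fintype.card (SketchSpace d P C) : ℝ)) ^ R := by
        rw [hcardM]
        push_cast
        ring
      rw [hcM]
      linarith
    calc (Fintype.card (MoMSpace d P C R) : ℝ≥0∞)⁻¹ * ((∑ q : Fin d, (SQ q).card : ℕ) : ℝ≥0∞)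
        = ENNReal.ofReal ((Fintype.card (MoMSpace d P C R) : ℝ)⁻¹
            * ((∑ q : Fin d, (SQ q).card : ℕ) : ℝ)) := by
          rw [ENNReal.ofReal_mul (by positivity), ENNReal.ofReal_inv_of_pos hM0,
            ENNReal.ofReal_natCast, ENNReal.ofReal_natCast]
      _ ≤ ENNReal.ofReal β := by
          apply ENNReal.ofReal_le_ofReal
          rw [inv_mul_le_iff₀ hM0]
          linarith [hreal]
  rw [tsub_le_iff_right]
  have hcover : (Set.univ : Set (MoMSpace d P C R)) ⊆
      {ω : MoMSpace d P C R | ∀ q : Fin d,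
        (MoMU ω (fun r => Sk (ω r) z) q - z q) ^ 2 ≤ t2}
      ∪ ⋃ q : Fin d, {ω : MoMSpace d P C R |
        t2 < (MoMU ω (fun r => Sk (ω r) z) q - z q) ^ 2} := by
    intro ω _
    by_cases hall : ∀ q : Fin d, (MoMU ω (fun r => Sk (ω r) z) q - z q) ^ 2 ≤ t2
    · exact Or.inl hall
    · push_neg at hall
      obtain ⟨q, hq⟩ := hall
      exact Or.inr (Set.mem_iUnion.2 ⟨q, hq⟩)
  calc (1 : ℝ≥0∞) = unifMeasure (MoMSpace d P C R) Set.univ := hμuniv.symm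
    _ ≤ unifMeasure (MoMSpace d P C R)
        ({ω : MoMSpace d P C R | ∀ q : Fin d,
          (MoMU ω (fun r => Sk (ω r) z) q - z q) ^ 2 ≤ t2}
        ∪ ⋃ q : Fin d, {ω : MoMSpace d P C R |
          t2 < (MoMU ω (fun r => Sk (ω r) z) q - z q) ^ 2}) := measure_mono hcover
    _ ≤ unifMeasure (MoMSpace d P C R)
          {ω : MoMSpace d P C R | ∀ q : Fin d,
            (MoMU ω (fun r => Sk (ω r) z) q - z q) ^ 2 ≤ t2}
        + unifMeasure (MoMSpace d P C R)
          (⋃ q : Fin d, {ω : MoMSpace d P C R |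
            t2 < (MoMU ω (fun r => Sk (ω r) z) q - z q) ^ 2}) := measure_union_le _ _
    _ ≤ unifMeasure (MoMSpace d P C R)
          {ω : MoMSpace d P C R | ∀ q : Fin d,
            (MoMU ω (fun r => Sk (ω r) z) q - z q) ^ 2 ≤ t2}
        + ENNReal.ofReal β := add_le_add_right hUB _
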